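/- The birational maps σ₁, σ₂, σ₃ satisfy, at every point of ℂ⁴×ℂ×ℂ² where all denominators occurring in the relevant compositions are nonzero (in particular t ≠ 0 for σ₁): (i) σ₁∘σ₁, σ₂∘σ₂, σ₃∘σ₃ are the identity; and (ii) the semidirect-product relations σ₁∘w₀∘σ₁ = w₃, σ₁∘w₁∘σ₁ = w₂, σ₂∘w₀∘σ₂ = w₂, σ₂∘w₁∘σ₂ = w₁, σ₃∘w₁∘σ₃ = w₃, σ₃∘w₀∘σ₃ = w₀, corresponding to the permutations σ₁ = (α₀α₃)(α₁α₂), σ₂ = (α₀α₂), σ₃ = (α₁α₃) of the symmetry roots. -/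

import Mathlib

/-- A point of the family of `D₅⁽¹⁾` Sakai surfaces: root variables `(a₀,a₁,a₂,a₃)`, the
independent parameter `t`, and the coordinates `(q,p)`. -/
structure PV where
  a0 : ℂ
  a1 : ℂ
  a2 : ℂ
  a3 : ℂ
  t : ℂ
  q : ℂ
  p : ℂ

/-- The Bäcklund transformation `w₀`, the reflection in the symmetry root `α₀`. -/
noncomputable def w0 (s : PV) : PV :=
  ⟨-s.a0, s.a0 + s.a1, s.a2, s.a0 + s.a3, s.t, s.q + s.a0 / (s.p + s.t), s.p⟩

/-- The Bäcklund transformation `w₁`, the reflection in the symmetry root `α₁`. -/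
noncomputable def w1 (s : PV) : PV :=
  ⟨s.a0 + s.a1, -s.a1, s.a1 + s.a2, s.a3, s.t, s.q, s.p - s.a1 / s.q⟩

/-- The Bäcklund transformation `w₂`, the reflection in the symmetry root `α₂`. -/
noncomputable def w2 (s : PV) : PV :=
  ⟨s.a0, s.a1 + s.a2, -s.a2, s.a2 + s.a3, s.t, s.q + s.a2 / s.p, s.p⟩

/-- The Bäcklund transformation `w₃`, the reflection in the symmetry root `α₃`. -/
noncomputable def w3 (s : PV) : PV :=
  ⟨s.a0 + s.a3, s.a1, s.a2 + s.a3, -s.a3, s.t, s.q, s.p - s.a3 / (s.q - 1)⟩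

/-- The Dynkin diagram automorphism `σ₁ = (α₀α₃)(α₁α₂)`. -/
noncomputable def sigma1 (s : PV) : PV :=
  ⟨s.a3, s.a2, s.a1, s.a0, -s.t, -s.p / s.t, s.q * s.t⟩

/-- The Dynkin diagram automorphism `σ₂ = (α₀α₂)`. -/
def sigma2 (s : PV) : PV :=
  ⟨s.a2, s.a1, s.a0, s.a3, -s.t, s.q, s.p + s.t⟩

/-- The Dynkin diagram automorphism `σ₃ = (α₁α₃)`. -/
def sigma3 (s : PV) : PV :=
  ⟨s.a0, s.a3, s.a2, s.a1, -s.t, 1 - s.q, -s.p⟩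

/-- The denominator-nonvanishing condition for `w₀` at `s`: `p + t ≠ 0`. -/
def Def0 (s : PV) : Prop := s.p + s.t ≠ 0

/-- The denominator-nonvanishing condition for `w₁` at `s`: `q ≠ 0`. -/
def Def1 (s : PV) : Prop := s.q ≠ 0

/-- The denominator-nonvanishing condition for `w₂` at `s`: `p ≠ 0`. -/
def Def2 (s : PV) : Prop := s.p ≠ 0

/-- The denominator-nonvanishing condition for `w₃` at `s`: `q − 1 ≠ 0`. -/
def Def3 (s : PV) : Prop := s.q - 1 ≠ 0

/-- The denominator-nonvanishing condition for `σ₁` at `s`: `t ≠ 0`. -/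
def DefS1 (s : PV) : Prop := s.t ≠ 0

/-- The Dynkin diagram automorphisms `σ₁, σ₂, σ₃` are involutions wherever
defined (in particular `t ≠ 0` is needed for `σ₁`), and they conjugate the reflections
`w₀, w₁, w₂, w₃` according to the permutations `σ₁ = (α₀α₃)(α₁α₂)`, `σ₂ = (α₀α₂)`,
`σ₃ = (α₁α₃)` of the symmetry roots, at every point where all denominators occurring in the
relevant compositions are nonzero. -/
theorem sigma_relations (s : PV) :
    -- (i) involutions
    (s.t ≠ 0 → sigma1 (sigma1 s) = s) ∧
    (sigma2 (sigma2 s) = s) ∧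
    (sigma3 (sigma3 s) = s) ∧
    -- (ii) σ₁∘w₀∘σ₁ = w₃
    (DefS1 s → Def0 (sigma1 s) → DefS1 (w0 (sigma1 s)) → Def3 s →
      sigma1 (w0 (sigma1 s)) = w3 s) ∧
    -- σ₁∘w₁∘σ₁ = w₂
    (DefS1 s → Def1 (sigma1 s) → DefS1 (w1 (sigma1 s)) → Def2 s →
      sigma1 (w1 (sigma1 s)) = w2 s) ∧
    -- σ₂∘w₀∘σ₂ = w₂
    (Def0 (sigma2 s) → Def2 s → sigma2 (w0 (sigma2 s)) = w2 s) ∧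
    -- σ₂∘w₁∘σ₂ = w₁
    (Def1 (sigma2 s) → Def1 s → sigma2 (w1 (sigma2 s)) = w1 s) ∧
    -- σ₃∘w₁∘σ₃ = w₃
    (Def1 (sigma3 s) → Def3 s → sigma3 (w1 (sigma3 s)) = w3 s) ∧
    -- σ₃∘w₀∘σ₃ = w₀
    (Def0 (sigma3 s) → Def0 s → sigma3 (w0 (sigma3 s)) = w0 s) := by
  obtain ⟨a0,a1,a2,a3,t,q,p⟩ := s
  simp only [Def0, Def1, Def2, Def3, DefS1, w0, w1, w2, w3, sigma1, sigma2, sigma3]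
  refine ⟨fun ht => ?_, ?_, ?_, fun ht h0 hs h3 => ?_, fun ht h1 hs h2 => ?_,
    fun h0 h2 => ?_, fun h1 h1' => ?_, fun h1 h3 => ?_, fun h0 h0' => ?_⟩ <;>
  congr 1 <;>
  first
    | ring
    | (field_simp <;> ring)
    | skip
  · field_simp
  · field_simp
  · field_simp
  · have h : -t + t * q ≠ 0 := fun h => h0 (by linear_combination h)
    have h' : (-1 : ℂ) + q ≠ 0 := fun h => h3 (by linear_combination h)
    field_simp [h, h']
  · field_simp
  · field_simp
  · have h' : (-1 : ℂ) + q ≠ 0 := fun h => h3 (by linear_combination h)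
    field_simp [h']
    ring
  · have h : -p - t ≠ 0 := fun h => h0' (by linear_combination -h)
    field_simp [h]
    ring
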